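/- The set {ξ ∈ ℝ : v̂_{b,A}(ξ) ≥ η} has Hausdorff dimension zero. -/

import Mathlib

open Filter MeasureTheory Set

/-- Distance to the nearest integer. -/
noncomputable def dni (x : ℝ) : ℝ := |x - round x|

/-- Asymptotic approximation exponent `v_{b,A}(ξ)` (valued in `EReal`). -/
noncomputable def vbA (b : ℕ) (a : ℕ → ℕ) (ξ : ℝ) : EReal :=
  sSup ((fun v : ℝ => (v : EReal)) ''
    {v : ℝ | 0 ≤ v ∧ ∃ᶠ n in atTop, 1 ≤ n ∧
      dni ((b : ℝ) ^ (a n) * ξ) < (b : ℝ) ^ (-(a n : ℝ) * v)})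

/-- Uniform approximation exponent `v̂_{b,A}(ξ)` (valued in `EReal`). -/
noncomputable def vhatbA (b : ℕ) (a : ℕ → ℕ) (ξ : ℝ) : EReal :=
  sSup ((fun v : ℝ => (v : EReal)) ''
    {v : ℝ | 0 ≤ v ∧ ∀ᶠ N in atTop, ∃ n, 1 ≤ n ∧ n ≤ N ∧
      dni ((b : ℝ) ^ (a n) * ξ) < (b : ℝ) ^ (-(a N : ℝ) * v)})

open Topology
open scoped ENNReal NNReal


lemma dni_nonneg (x : ℝ) : 0 ≤ dni x := abs_nonneg _

lemma dni_le_half (x : ℝ) : dni x ≤ 1/2 := abs_sub_round x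

lemma dni_pow_mul (b : ℕ) (hb : 2 ≤ b) (x : ℝ) (m : ℕ)
    (h : (b:ℝ)^m * dni x < 1/2) : dni ((b:ℝ)^m * x) = (b:ℝ)^m * dni x := by
  have hbpos : (0:ℝ) ≤ (b:ℝ)^m := by positivity
  set p := round x with hp
  have key : (b:ℝ)^m * x = (b:ℝ)^m * (x - p) + ((b^m * p : ℤ) : ℝ) := by push_cast; ring
  have habs : |(b:ℝ)^m * (x - p)| = (b:ℝ)^m * dni x := by
    rw [abs_mul, abs_of_nonneg hbpos]; rfl
  have hr0 : round ((b:ℝ)^m * (x - p)) = 0 := by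
    rw [round_eq_zero_iff]
    constructor
    · nlinarith [abs_le.1 (le_of_lt (habs ▸ h)), neg_abs_le ((b:ℝ)^m * (x - p))]
    · calc (b:ℝ)^m * (x - p) ≤ |(b:ℝ)^m * (x - p)| := le_abs_self _
        _ < 1/2 := habs ▸ h
  have hround : round ((b:ℝ)^m * x) = (b^m * p : ℤ) := by
    rw [key, round_add_intCast, hr0, zero_add]
  rw [dni, hround, key]
  push_cast
  rw [show (b:ℝ)^m * (x - ↑p) + (b:ℝ)^m * ↑p - (b:ℝ)^m * ↑p = (b:ℝ)^m * (x - ↑p) by ring]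
  rw [habs]

set_option maxHeartbeats 1000000 in
lemma lemma1 (b : ℕ) (hb : 2 ≤ b) (a : ℕ → ℕ) (ha : StrictMono a) (hpos : ∀ n, 1 ≤ a n)
    (η : ℝ) (hη1 : 1 ≤ η)
    (hratio : ∀ ε : ℝ, 0 < ε → ∀ᶠ N in atTop, (a (N+1) : ℝ) ≤ (η + ε) * a N)
    (ξ : ℝ) (hξ : ∀ x : ℕ, dni ((b:ℝ)^x * ξ) ≠ 0)
    (hvhat : ∀ ε : ℝ, 0 < ε → ∃ v : ℝ, η - ε < v ∧ v ≤ η ∧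
      ∀ᶠ N in atTop, ∃ n, 1 ≤ n ∧ n ≤ N ∧
        dni ((b:ℝ)^(a n) * ξ) < (b:ℝ) ^ (-((a N : ℝ) * v)))
    (w : ℝ) (hwη : η ≤ w) :
    ∃ᶠ n in atTop, dni ((b:ℝ)^(a n) * ξ) < (b:ℝ) ^ (-((a n : ℝ) * w)) := by
  classical
  have hb1 : (1:ℝ) < b := by exact_mod_cast lt_of_lt_of_le one_lt_two hb
  have hb0 : (0:ℝ) < b := by positivity
  have hbne : (b:ℝ) ≠ 1 := ne_of_gt hb1
  have hw1 : 1 ≤ w := le_trans hη1 hwη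
  have hw0 : (0:ℝ) < w := by linarith
  by_contra hcon
  rw [Filter.not_frequently] at hcon
  obtain ⟨n₁, hn₁⟩ := Filter.eventually_atTop.mp hcon
  set D : ℕ → ℝ := fun x => dni ((b:ℝ)^x * ξ) with hDdef
  set Rf : ℕ → ℝ := fun x => -Real.logb b (D x) with hRdef
  have hD0 : ∀ x, 0 < D x := fun x => lt_of_le_of_ne (dni_nonneg _) (Ne.symm (hξ x))
  have hDR : ∀ x, D x = (b:ℝ) ^ (-(Rf x)) := by
    intro x
    rw [hRdef]; simp only [neg_neg]
    rw [Real.rpow_logb hb0 hbne (hD0 x)]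
  have hlt : ∀ (x : ℕ) (t : ℝ), D x < (b:ℝ) ^ (-t) ↔ t < Rf x := by
    intro x t
    rw [hDR x, Real.rpow_lt_rpow_left_iff hb1, neg_lt_neg_iff]
  have hle : ∀ (x : ℕ) (t : ℝ), (b:ℝ) ^ (-t) ≤ D x ↔ Rf x ≤ t := by
    intro x t
    rw [hDR x, Real.rpow_le_rpow_left_iff hb1, neg_le_neg_iff]
  have hcapR : ∀ n, n₁ ≤ n → Rf (a n) ≤ (a n : ℝ) * w := by
    intro n hn
    exact (hle (a n) _).mp (not_lt.mp (hn₁ n hn))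
  -- chain lemma
  have hchain : ∀ p q : ℕ, p ≤ q → ((q : ℝ) - p) + 1 < Rf p →
      Rf p = ((q : ℝ) - p) + Rf q := by
    intro p q hpq hcond
    have hcast : ((q - p : ℕ) : ℝ) = (q : ℝ) - p := by
      push_cast [Nat.cast_sub hpq]; ring
    have hDpow : (b:ℝ)^(q-p) * D p = (b:ℝ) ^ (((q:ℝ) - p) - Rf p) := by
      rw [hDR p, ← Real.rpow_natCast (b:ℝ) (q-p), ← Real.rpow_add hb0, hcast]
      ring_nf
    have hmul : (b:ℝ)^(q-p) * D p < 1/2 := by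
      rw [hDpow]
      calc (b:ℝ) ^ (((q:ℝ)-p) - Rf p) < (b:ℝ) ^ (-1 : ℝ) :=
            (Real.rpow_lt_rpow_left_iff hb1).mpr (by linarith)
        _ ≤ 1/2 := by
            rw [Real.rpow_neg_one]
            calc (b:ℝ)⁻¹ ≤ (2:ℝ)⁻¹ :=
                  inv_anti₀ (by norm_num) (by exact_mod_cast hb)
              _ = 1/2 := by norm_num
    have hDq : D q = (b:ℝ) ^ (((q:ℝ) - p) - Rf p) := by
      have h1 : (b:ℝ)^(q-p) * ((b:ℝ)^p * ξ) = (b:ℝ)^q * ξ := by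
        rw [← mul_assoc, ← pow_add, Nat.sub_add_cancel hpq]
      have h2 := dni_pow_mul b hb ((b:ℝ)^p * ξ) (q-p) (by exact hmul)
      calc D q = dni ((b:ℝ)^(q-p) * ((b:ℝ)^p * ξ)) := by rw [h1]
        _ = (b:ℝ)^(q-p) * D p := h2
        _ = _ := hDpow
    have : -(Rf q) = ((q:ℝ) - p) - Rf p := by
      calc -(Rf q) = Real.logb b ((b:ℝ) ^ (-(Rf q))) := (Real.logb_rpow hb0 hbne).symm
        _ = Real.logb b ((b:ℝ) ^ (((q:ℝ)-p) - Rf p)) := by rw [← hDR q, hDq]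
        _ = ((q:ℝ)-p) - Rf p := Real.logb_rpow hb0 hbne
    linarith
  -- choose ε and v
  set ε : ℝ := η / (100 * (1 + w)) with hεdef
  have h1w : (0:ℝ) < 1 + w := by linarith
  have hεpos : 0 < ε := div_pos (by linarith) (by positivity)
  have hεHw : ε * (1 + w) = η / 100 := by
    rw [hεdef]; field_simp
  have hε2 : ε * 2 ≤ η / 100 := by nlinarith [hεHw, hεpos]
  clear_value ε
  obtain ⟨v, hv1, hv2, hserve⟩ := hvhat ε hεpos
  have hv0 : 0 < v := by linarith
  -- tendsto facts
  have hatendN : Tendsto a atTop atTop :=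
    tendsto_atTop_mono (fun n => ha.le_apply) tendsto_id
  have hatend : Tendsto (fun n => (a n : ℝ)) atTop atTop :=
    tendsto_natCast_atTop_atTop.comp hatendN
  have htend0 : Tendsto (fun N : ℕ => (b:ℝ) ^ (-((a N : ℝ) * v))) atTop (𝓝 0) := by
    have h1 : Tendsto (fun N : ℕ => (a N : ℝ) * v) atTop atTop :=
      hatend.atTop_mul_const hv0
    have h2 : Tendsto (fun N : ℕ => -((a N : ℝ) * v)) atTop atBot :=
      tendsto_neg_atTop_atBot.comp h1
    have h3 : Tendsto (fun N : ℕ => Real.log b * -((a N : ℝ) * v)) atTop atBot :=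
      (tendsto_const_mul_atBot_of_pos (Real.log_pos hb1)).mpr h2
    have h4 := Real.tendsto_exp_atBot.comp h3
    refine h4.congr (fun N => ?_)
    simp only [Function.comp]
    rw [Real.rpow_def_of_pos hb0]
  have hthresh : ∀ᶠ N in atTop, ∀ j ∈ Finset.range n₁, (b:ℝ) ^ (-((a N:ℝ)*v)) < D (a j) := by
    rw [eventually_all_finset]
    intro j _hj
    exact htend0.eventually_lt_const (hD0 (a j))
  have hbig : ∀ᶠ N in atTop, 2*(1+w) ≤ (a N : ℝ) := hatend.eventually_ge_atTop _
  obtain ⟨N₀, hN₀⟩ := eventually_atTop.mp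
    ((hserve.and (hratio ε hεpos)).and (hthresh.and hbig))
  have serve2 : ∀ N, N₀ ≤ N → ∃ n, n₁ ≤ n ∧ n ≤ N ∧ (a N : ℝ) * v < Rf (a n) := by
    intro N hN
    obtain ⟨⟨⟨n, _hn1, hnN, hdn⟩, _⟩, ⟨hth, _⟩⟩ := hN₀ N hN
    refine ⟨n, ?_, hnN, (hlt (a n) _).mp hdn⟩
    by_contra hlt'
    push_neg at hlt'
    exact absurd hdn (not_lt.mpr (le_of_lt (hth n (Finset.mem_range.mpr hlt'))))
  obtain ⟨n₀, hn₀n₁, hn₀N, hn₀R⟩ := serve2 N₀ le_rfl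
  have hbig₀ : 2*(1+w) ≤ (a N₀ : ℝ) := (hN₀ N₀ le_rfl).2.2
  set E₀ : ℝ := (a n₀ : ℝ) + Rf (a n₀) with hE₀def
  have hPex : ∃ k, n₁ ≤ k ∧ ((a k : ℝ) + Rf (a k) = E₀) := ⟨n₀, hn₀n₁, rfl⟩
  set kstar := Nat.find hPex with hkstardef
  obtain ⟨hkn₁, hkE⟩ := Nat.find_spec hPex
  have hksle : kstar ≤ n₀ := Nat.find_min' hPex ⟨hn₀n₁, rfl⟩
  have hxsle : ((a kstar : ℕ) : ℝ) ≤ (a n₀ : ℝ) := by exact_mod_cast ha.monotone hksle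
  have hRxs : Rf (a kstar) = E₀ - (a kstar : ℝ) := by linarith
  have hRxsge : (a N₀ : ℝ) * v < E₀ - (a kstar : ℝ) := by
    have : Rf (a n₀) ≤ E₀ - (a kstar : ℝ) := by rw [hE₀def]; linarith
    linarith
  clear_value E₀
  have hQex : ∃ k, E₀ - ((a kstar : ℕ) : ℝ) < (a k : ℝ) * v := by
    obtain ⟨k, hk⟩ := (hatend.eventually_ge_atTop ((E₀ - (a kstar : ℝ))/v + 1)).exists
    refine ⟨k, ?_⟩
    have h := mul_le_mul_of_nonneg_right hk hv0.le
    rw [add_mul, div_mul_cancel₀ _ (ne_of_gt hv0), one_mul] at h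
    linarith
  set N' := Nat.find hQex with hN'def
  have hQN' : E₀ - ((a kstar : ℕ) : ℝ) < (a N' : ℝ) * v := Nat.find_spec hQex
  have hnotQ : ∀ k, k < N' → (a k : ℝ) * v ≤ E₀ - (a kstar : ℝ) :=
    fun k hk => not_lt.mp (Nat.find_min hQex hk)
  have hN'gt : N₀ < N' := by
    by_contra hle'
    push_neg at hle'
    have h5 : (a N' : ℝ) ≤ a N₀ := by exact_mod_cast ha.monotone hle'
    have h5' := mul_le_mul_of_nonneg_right h5 hv0.le
    linarith
  have hMN₀ : N₀ ≤ N' - 1 := by omega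
  have hratM : (a N' : ℝ) ≤ (η + ε) * a (N' - 1) := by
    have h6 := (hN₀ (N'-1) hMN₀).1.2
    rwa [show N' - 1 + 1 = N' by omega] at h6
  have hQM : (a (N'-1) : ℝ) * v ≤ E₀ - (a kstar : ℝ) := hnotQ _ (by omega)
  obtain ⟨n', hn'n₁, hn'N', hn'R⟩ := serve2 N' (le_of_lt hN'gt)
  have hx'le : ((a n' : ℕ) : ℝ) ≤ (a N' : ℝ) := by exact_mod_cast ha.monotone hn'N'
  have hx'cap : Rf (a n') ≤ (a n' : ℝ) * w := hcapR n' hn'n₁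
  have hx'low : (a N' : ℝ) * v < (a n' : ℝ) * w := lt_of_lt_of_le hn'R hx'cap
  have hkey : w ≤ v * (w + 1) := by
    nlinarith [mul_le_mul_of_nonneg_right hv1.le (show (0:ℝ) ≤ w + 1 by linarith),
      hεHw, mul_nonneg (sub_nonneg.mpr hη1) (show (0:ℝ) ≤ w by linarith)]
  have haN'xs : ((a kstar : ℕ) : ℝ) + 1 ≤ (a N' : ℝ) := by
    have h7 : a N₀ < a N' := ha hN'gt
    have h8 : (a kstar : ℝ) ≤ a N₀ := le_trans hxsle (by exact_mod_cast ha.monotone hn₀N)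
    have h9 : (a N₀ : ℝ) + 1 ≤ a N' := by exact_mod_cast h7
    linarith
  by_cases hc2 : a n' < a kstar
  · -- Case 2 : new server strictly left of x*
    have hcc : ((a kstar : ℝ) - (a n' : ℝ)) + 1 < Rf (a n') := by
      have hstep : w * (((a kstar : ℝ)) + 1 - (a n' : ℝ)) < w * ((a N':ℝ) * v) := by
        nlinarith [mul_le_mul_of_nonneg_left haN'xs hw0.le,
          mul_nonneg (sub_nonneg.mpr hkey) (Nat.cast_nonneg (a N') : (0:ℝ) ≤ a N'),
          hx'low]
      have := (mul_lt_mul_iff_right₀ hw0).mp hstep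
      linarith
    have hch := hchain (a n') (a kstar) (le_of_lt hc2) hcc
    have hPn' : n₁ ≤ n' ∧ ((a n' : ℝ) + Rf (a n') = E₀) := ⟨hn'n₁, by linarith⟩
    have h10 : kstar ≤ n' := Nat.find_min' hPex hPn'
    have h11 : a kstar ≤ a n' := ha.monotone h10
    omega
  · push_neg at hc2   -- a kstar ≤ a n'
    have hc2' : ((a kstar : ℕ) : ℝ) ≤ (a n' : ℝ) := by exact_mod_cast hc2
    by_cases hc1 : ((a n' : ℕ) : ℝ) + 1 < E₀
    · -- Case 1
      have hcc : ((a n' : ℝ) - (a kstar : ℝ)) + 1 < Rf (a kstar) := by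
        rw [hRxs]; linarith
      have hch := hchain (a kstar) (a n') hc2 hcc
      linarith [hn'R, hQN', hRxs]
    · push_neg at hc1  -- E₀ ≤ a n' + 1
      have hxscap : Rf (a kstar) ≤ (a kstar : ℝ) * w := hcapR kstar hkn₁
      have hF2 : E₀ ≤ (1 + w) * (a kstar : ℝ) := by
        rw [hRxs] at hxscap; nlinarith
      have hF0 : v * (E₀ - 1) ≤ (η + ε) * (E₀ - (a kstar : ℝ)) := by
        have h12 : v * (E₀ - 1) ≤ v * (a n' : ℝ) :=
          mul_le_mul_of_nonneg_left (by linarith) hv0.le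
        have h13 : v * ((a n' : ℕ) : ℝ) ≤ v * (a N' : ℝ) :=
          mul_le_mul_of_nonneg_left hx'le hv0.le
        have h14 : v * (a N' : ℝ) ≤ (η + ε) * ((a (N'-1) : ℝ) * v) := by
          calc v * (a N' : ℝ) ≤ v * ((η + ε) * (a (N'-1) : ℝ)) :=
                mul_le_mul_of_nonneg_left hratM hv0.le
            _ = (η + ε) * ((a (N'-1) : ℝ) * v) := by ring
        have h15 : (η + ε) * ((a (N'-1):ℝ) * v) ≤ (η+ε)*(E₀ - (a kstar : ℝ)) :=
          mul_le_mul_of_nonneg_left hQM (by linarith)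
        linarith
      have hE₀big : 1 + 2*(1+w)*v ≤ E₀ := by
        have h16 : (1:ℝ) ≤ a n₀ := by exact_mod_cast hpos n₀
        nlinarith [hn₀R, mul_le_mul_of_nonneg_right hbig₀ hv0.le]
      have hE₀1 : (1:ℝ) ≤ E₀ := by nlinarith
      -- combine
      have s1 : (1+w) * (v * (E₀ - 1)) ≤ (1+w) * ((η+ε)*(E₀ - (a kstar:ℝ))) :=
        mul_le_mul_of_nonneg_left hF0 (by linarith)
      have s3 : (1+w)*(E₀ - (a kstar:ℝ)) ≤ w * E₀ := by nlinarith
      have s4 : (η+ε) * ((1+w)*(E₀-(a kstar:ℝ))) ≤ (η+ε) * (w*E₀) :=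
        mul_le_mul_of_nonneg_left s3 (by linarith)
      have s5 : (η - ε) * (E₀ - 1) ≤ v * (E₀ - 1) :=
        mul_le_mul_of_nonneg_right hv1.le (by linarith)
      have s6 : (1+w) * ((η-ε)*(E₀-1)) ≤ (η+ε)*(w*E₀) := by
        have s5' := mul_le_mul_of_nonneg_left s5 (show (0:ℝ) ≤ 1+w by linarith)
        calc (1+w) * ((η-ε)*(E₀-1)) ≤ (1+w) * (v*(E₀-1)) := s5'
          _ ≤ (1+w) * ((η+ε)*(E₀ - (a kstar:ℝ))) := s1
          _ = (η+ε) * ((1+w)*(E₀-(a kstar:ℝ))) := by ring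
          _ ≤ _ := s4
      have hεw : ε * w ≤ η/100 := by linarith [hεHw, hεpos]
      have hεE : ε * (1+w) * E₀ = η/100 * E₀ := by rw [hεHw]
      have hεwE : ε * w * E₀ ≤ η/100 * E₀ :=
        mul_le_mul_of_nonneg_right hεw (by linarith)
      have hVlow : (1+w) - 1/100 ≤ (1+w)*v := by
        have t1 : (1+w)*(η-ε) ≤ (1+w)*v :=
          mul_le_mul_of_nonneg_left hv1.le (by linarith)
        have t2 : ((1+w) - 1/100) * 1 ≤ ((1+w) - 1/100) * η :=
          mul_le_mul_of_nonneg_left hη1 (by linarith)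
        linarith [t1, t2, hεHw]
      have hfin1 : η * ((98/100) * E₀ - (1+w) + 1/100) ≤ 0 := by
        linarith [s6, hεE, hεwE, hεHw]
      have hfin2 : (0:ℝ) < (98/100) * E₀ - (1+w) + 1/100 := by linarith
      linarith [mul_pos (show (0:ℝ) < η by linarith) hfin2]



lemma ediam_closedBall_le (x r : ℝ) :
    EMetric.diam (Metric.closedBall x r) ≤ ENNReal.ofReal (2*r) := by
  apply EMetric.diam_le
  intro p hp q hq
  rw [edist_dist]
  apply ENNReal.ofReal_le_ofReal
  rw [Metric.mem_closedBall] at hp hq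
  calc dist p q ≤ dist p x + dist q x := dist_triangle_right _ _ _
    _ ≤ 2*r := by linarith

set_option maxHeartbeats 1000000 in
lemma cover_zero (b : ℕ) (hb : 2 ≤ b) (a : ℕ → ℕ) (ha : StrictMono a)
    (s : ℝ) (hs : 0 < s) (w : ℕ) (hw : 2 ≤ s * (1 + (w:ℝ))) :
    μH[s] {ξ : ℝ | ∃ᶠ n in atTop,
      dni ((b:ℝ)^(a n) * ξ) < (b:ℝ) ^ (-((a n : ℝ) * (w:ℝ)))} = 0 := by
  have hb1 : (1:ℝ) < b := by exact_mod_cast lt_of_lt_of_le one_lt_two hb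
  have hb0 : (0:ℝ) < b := by positivity
  set K := {ξ : ℝ | ∃ᶠ n in atTop,
      dni ((b:ℝ)^(a n) * ξ) < (b:ℝ) ^ (-((a n : ℝ) * (w:ℝ)))} with hK
  have hcover : K ⊆ ⋃ M : ℤ, K ∩ Icc (M:ℝ) (M+1) := fun ξ hξ =>
    mem_iUnion.mpr ⟨⌊ξ⌋, hξ, Int.floor_le ξ, (Int.lt_floor_add_one ξ).le⟩
  refine measure_mono_null hcover (measure_iUnion_null fun M => ?_)
  set ρ : ℕ → ℝ := fun n => (b:ℝ) ^ (-((1:ℝ)+w) * (a n)) with hρ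
  have hρpos : ∀ n, 0 < ρ n := fun n => Real.rpow_pos_of_pos hb0 _
  have h1w : (0:ℝ) < 1 + w := by positivity
  have hρmono : ∀ m n : ℕ, m ≤ n → ρ n ≤ ρ m := by
    intro m n h
    apply (Real.rpow_le_rpow_left_iff hb1).mpr
    have h2 : (a m : ℝ) ≤ a n := by exact_mod_cast ha.monotone h
    nlinarith
  set t : ℕ → ℕ × ℕ → Set ℝ := fun N ij =>
    if ij.2 ≤ b ^ (a (N + ij.1)) + 2 then
      Metric.closedBall ((M:ℝ) + ((ij.2 : ℝ) - 1) * ((b:ℝ) ^ (a (N + ij.1)))⁻¹)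
        (ρ (N + ij.1))
    else ∅ with ht
  have hdiam : ∀ N ij, EMetric.diam (t N ij) ≤ ENNReal.ofReal (2 * ρ N) := by
    intro N ij
    by_cases h : ij.2 ≤ b ^ (a (N + ij.1)) + 2
    · simp only [ht, if_pos h]
      refine le_trans (ediam_closedBall_le _ _) (ENNReal.ofReal_le_ofReal ?_)
      have := hρmono N (N + ij.1) (Nat.le_add_right _ _)
      linarith
    · simp [ht, if_neg h, show EMetric.diam (∅ : Set ℝ) = 0 from Metric.ediam_empty]
  have hρ0 : Tendsto ρ atTop (𝓝 0) := by
    have hatendN : Tendsto a atTop atTop :=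
      tendsto_atTop_mono (fun n => ha.le_apply) tendsto_id
    have hatend : Tendsto (fun n => (a n : ℝ)) atTop atTop :=
      tendsto_natCast_atTop_atTop.comp hatendN
    have h1 : Tendsto (fun N : ℕ => (a N : ℝ) * (1+w)) atTop atTop :=
      hatend.atTop_mul_const h1w
    have h2 : Tendsto (fun N : ℕ => -((a N : ℝ) * (1+w))) atTop atBot :=
      tendsto_neg_atTop_atBot.comp h1
    have h3 : Tendsto (fun N : ℕ => Real.log b * -((a N : ℝ) * (1+w))) atTop atBot :=
      (tendsto_const_mul_atBot_of_pos (Real.log_pos hb1)).mpr h2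
    have h4 := Real.tendsto_exp_atBot.comp h3
    refine h4.congr (fun N => ?_)
    simp only [Function.comp]
    rw [show ρ N = (b:ℝ) ^ (-(1 + (w:ℝ)) * (a N)) from rfl, Real.rpow_def_of_pos hb0]
    congr 1
    ring
  have hr0 : Tendsto (fun N => ENNReal.ofReal (2 * ρ N)) atTop (𝓝 0) := by
    have h2 : Tendsto (fun N => 2 * ρ N) atTop (𝓝 (2*0)) := hρ0.const_mul 2
    rw [mul_zero] at h2
    simpa using ENNReal.tendsto_ofReal h2
  have hst : ∀ N : ℕ, K ∩ Icc (M:ℝ) (M+1) ⊆ ⋃ ij : ℕ × ℕ, t N ij := by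
    intro N ξ hξ
    obtain ⟨hKξ, hI1, hI2⟩ := hξ
    obtain ⟨n, hnN, hdn⟩ := frequently_atTop.mp hKξ N
    have hB0 : (0:ℝ) < (b:ℝ)^(a n) := by positivity
    set B : ℝ := (b:ℝ)^(a n) with hBdef
    set p : ℤ := round (B * ξ) with hpdef
    have h1 : |B * ξ - p| < (b:ℝ) ^ (-((a n:ℝ)*(w:ℝ))) := hdn
    have hround : |B*ξ - p| ≤ 1/2 := abs_sub_round _
    have hBr : B = (b:ℝ) ^ ((a n : ℝ)) := by
      rw [hBdef, Real.rpow_natCast]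
    have hrw : (b:ℝ) ^ (-((a n:ℝ)*(w:ℝ))) = ρ n * B := by
      rw [show ρ n = (b:ℝ) ^ (-(1 + (w:ℝ)) * (a n)) from rfl, hBr, ← Real.rpow_add hb0]
      congr 1
      ring
    have h2 : |ξ - p / B| < ρ n := by
      have he : ξ - p/B = (B*ξ - p)/B := by
        rw [eq_div_iff (ne_of_gt hB0), sub_mul, div_mul_cancel₀ _ (ne_of_gt hB0)]
        ring
      rw [he, abs_div, abs_of_pos hB0, div_lt_iff₀ hB0, ← hrw]
      exact h1
    have hcast1 : ((p - (b:ℤ)^(a n) * M : ℤ) : ℝ) = (p:ℝ) - B * (M:ℝ) := by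
      push_cast
      rw [← hBdef]
      try ring
    have habs := abs_le.mp hround
    have hmul1 : B * (M:ℝ) ≤ B * ξ := mul_le_mul_of_nonneg_left hI1 hB0.le
    have hmul2 : B * ξ ≤ B * ((M:ℝ)+1) := mul_le_mul_of_nonneg_left hI2 hB0.le
    set q : ℤ := p - (b:ℤ)^(a n) * M + 1 with hqdef
    have hq0 : 0 ≤ q := by
      have hreal : (-1:ℝ) < (p:ℝ) - B*(M:ℝ) := by nlinarith [habs.1]
      have hint : (-1:ℤ) < p - (b:ℤ)^(a n) * M := by
        rw [← hcast1] at hreal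
        exact_mod_cast hreal
      omega
    have hq2 : q ≤ (b:ℤ)^(a n) + 2 := by
      have hreal : (p:ℝ) - B*(M:ℝ) < B + 1 := by nlinarith [habs.2]
      have hint : p - (b:ℤ)^(a n)*M < (b:ℤ)^(a n) + 1 := by
        have h' : ((p - (b:ℤ)^(a n)*M : ℤ):ℝ) < (((b:ℤ)^(a n) + 1 : ℤ):ℝ) := by
          rw [hcast1]
          push_cast
          rw [← hBdef]
          linarith
        exact_mod_cast h'
      omega
    set j : ℕ := q.toNat with hjdef
    have hjq : (j:ℤ) = q := Int.toNat_of_nonneg hq0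
    have hjle : j ≤ b ^ (a n) + 2 := by
      have h' : (j:ℤ) ≤ ((b ^ (a n) + 2 : ℕ) : ℤ) := by
        rw [hjq]
        push_cast
        omega
      exact_mod_cast h'
    refine mem_iUnion.mpr ⟨(n - N, j), ?_⟩
    have hNn : N + (n - N) = n := by omega
    simp only [ht, hNn]
    rw [if_pos hjle, Metric.mem_closedBall]
    have hjr : ((j:ℕ):ℝ) = ((q:ℤ):ℝ) := by exact_mod_cast hjq
    have hcenter : (M:ℝ) + ((j:ℝ) - 1) * B⁻¹ = (p:ℝ)/B := by
      rw [hjr, hqdef]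
      push_cast
      rw [← hBdef]
      field_simp
      ring
    rw [Real.dist_eq]
    rw [show (M:ℝ) + ((j:ℝ) - 1) * ((b:ℝ)^(a n))⁻¹ = (p:ℝ)/B from hcenter]
    exact le_of_lt h2
  -- the measure bound
  have hμ := Measure.hausdorffMeasure_le_liminf_tsum s (K ∩ Icc (M:ℝ) ((M:ℝ)+1))
    (fun N => ENNReal.ofReal (2 * ρ N)) hr0 t
    (Eventually.of_forall hdiam) (Eventually.of_forall hst)
  -- real-side estimate
  have hreal : ∀ n : ℕ, ((b ^ (a n) + 3 : ℕ):ℝ) * (2*ρ n)^s ≤ (4*2^s) * (2⁻¹:ℝ)^n := by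
    intro n
    have hbn1 : (1:ℝ) ≤ (b:ℝ)^(a n) := one_le_pow₀ (by linarith)
    have h1 : ((b ^ (a n) + 3 : ℕ):ℝ) ≤ 4 * (b:ℝ)^(a n) := by
      push_cast
      linarith
    have h2 : (2*ρ n)^s = 2^s * (ρ n)^s := Real.mul_rpow (by norm_num) (hρpos n).le
    have h3 : (ρ n)^s = (b:ℝ)^((-((1:ℝ)+w) * (a n))*s) := by
      rw [hρ, ← Real.rpow_mul hb0.le]
    have h4 : (b:ℝ)^(a n) * (ρ n)^s ≤ (b:ℝ)^(-(a n:ℝ)) := by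
      rw [h3, ← Real.rpow_natCast (b:ℝ) (a n), ← Real.rpow_add hb0]
      apply (Real.rpow_le_rpow_left_iff hb1).mpr
      have han : (0:ℝ) ≤ (a n : ℝ) := Nat.cast_nonneg _
      nlinarith
    have h5 : (b:ℝ)^(-(a n:ℝ)) ≤ (2⁻¹:ℝ)^n := by
      rw [Real.rpow_neg hb0.le, Real.rpow_natCast, inv_pow]
      apply inv_anti₀ (by positivity)
      calc (2:ℝ)^n ≤ (2:ℝ)^(a n) := by
            apply pow_le_pow_right₀ (by norm_num) ha.le_apply
        _ ≤ (b:ℝ)^(a n) := by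
            apply pow_le_pow_left₀ (by norm_num)
            exact_mod_cast hb
    have hρs : (0:ℝ) ≤ (ρ n)^s := Real.rpow_nonneg (hρpos n).le _
    have h2s : (0:ℝ) < 2^s := Real.rpow_pos_of_pos (by norm_num) _
    calc ((b ^ (a n) + 3 : ℕ):ℝ) * (2*ρ n)^s
        ≤ (4 * (b:ℝ)^(a n)) * (2^s * (ρ n)^s) := by
          rw [← h2]
          apply mul_le_mul_of_nonneg_right h1 (Real.rpow_nonneg (by positivity) _)
      _ = (4*2^s) * ((b:ℝ)^(a n) * (ρ n)^s) := by ring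
      _ ≤ (4*2^s) * (b:ℝ)^(-(a n:ℝ)) := by
          apply mul_le_mul_of_nonneg_left h4 (by positivity)
      _ ≤ (4*2^s) * (2⁻¹:ℝ)^n := by
          apply mul_le_mul_of_nonneg_left h5 (by positivity)
  -- sum bound
  have hsum : ∀ N : ℕ, (∑' ij : ℕ × ℕ, EMetric.diam (t N ij) ^ s)
      ≤ ENNReal.ofReal ((8 * 2^s) * (2⁻¹:ℝ)^N) := by
    intro N
    rw [ENNReal.tsum_prod']
    have inner : ∀ i : ℕ, (∑' j : ℕ, EMetric.diam (t N (i,j)) ^ s)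
        ≤ ENNReal.ofReal ((4*2^s) * (2⁻¹:ℝ)^(N+i)) := by
      intro i
      have hterm : ∀ j : ℕ, EMetric.diam (t N (i,j)) ^ s ≤
          (if j ∈ Finset.range (b ^ (a (N+i)) + 3) then
            ENNReal.ofReal ((2*ρ (N+i))^s) else 0) := by
        intro j
        by_cases hj : j ≤ b ^ (a (N+i)) + 2
        · rw [if_pos (Finset.mem_range.mpr (by omega))]
          have hd : EMetric.diam (t N (i,j)) ≤ ENNReal.ofReal (2*ρ (N+i)) := by
            simp only [ht, if_pos hj]
            exact ediam_closedBall_le _ _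
          calc EMetric.diam (t N (i,j))^s ≤ (ENNReal.ofReal (2*ρ (N+i)))^s :=
                ENNReal.rpow_le_rpow hd hs.le
            _ = ENNReal.ofReal ((2*ρ (N+i))^s) :=
                ENNReal.ofReal_rpow_of_pos (by positivity)
        · rw [if_neg (by simp; omega)]
          simp only [ht, if_neg hj]
          rw [show EMetric.diam (∅ : Set ℝ) = 0 from Metric.ediam_empty, ENNReal.zero_rpow_of_pos hs]
      calc (∑' j : ℕ, EMetric.diam (t N (i,j)) ^ s)
          ≤ ∑' j : ℕ, (if j ∈ Finset.range (b ^ (a (N+i)) + 3) then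
              ENNReal.ofReal ((2*ρ (N+i))^s) else 0) := ENNReal.tsum_le_tsum hterm
        _ = ∑ j ∈ Finset.range (b ^ (a (N+i)) + 3),
              ENNReal.ofReal ((2*ρ (N+i))^s) := by
            rw [tsum_eq_sum (fun j hj => if_neg hj)]
            exact Finset.sum_congr rfl (fun j hj => if_pos hj)
        _ = ((b ^ (a (N+i)) + 3 : ℕ) : ℝ≥0∞) * ENNReal.ofReal ((2*ρ (N+i))^s) := by
            rw [Finset.sum_const, Finset.card_range, nsmul_eq_mul]
        _ = ENNReal.ofReal (((b ^ (a (N+i)) + 3 : ℕ):ℝ) * (2*ρ (N+i))^s) := by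
            rw [ENNReal.ofReal_mul (by positivity), ENNReal.ofReal_natCast]
        _ ≤ ENNReal.ofReal ((4*2^s) * (2⁻¹:ℝ)^(N+i)) :=
            ENNReal.ofReal_le_ofReal (hreal (N+i))
    have hsummable : Summable (fun i : ℕ => (4*2^s) * (2⁻¹:ℝ)^(N+i)) := by
      simp_rw [pow_add]
      exact ((summable_geometric_of_lt_one (by norm_num) (by norm_num)).mul_left _).mul_left _
    have htsum : (∑' i:ℕ, (4*2^s) * (2⁻¹:ℝ)^(N+i)) = (8 * 2^s) * (2⁻¹:ℝ)^N := by
      have h6 : ∀ i:ℕ, (4*2^s) * (2⁻¹:ℝ)^(N+i) = ((4*2^s) * (2⁻¹:ℝ)^N) * (2⁻¹:ℝ)^i := by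
        intro i; rw [pow_add]; ring
      simp_rw [h6]
      rw [tsum_mul_left, tsum_geometric_of_lt_one (by norm_num) (by norm_num)]
      norm_num
      ring
    calc (∑' i:ℕ, ∑' j : ℕ, EMetric.diam (t N (i,j)) ^ s)
        ≤ ∑' i:ℕ, ENNReal.ofReal ((4*2^s) * (2⁻¹:ℝ)^(N+i)) := ENNReal.tsum_le_tsum inner
      _ = ENNReal.ofReal (∑' i:ℕ, (4*2^s) * (2⁻¹:ℝ)^(N+i)) :=
          (ENNReal.ofReal_tsum_of_nonneg (fun i => by positivity) hsummable).symm
      _ = ENNReal.ofReal ((8 * 2^s) * (2⁻¹:ℝ)^N) := by rw [htsum]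
  have hlim : Tendsto (fun N:ℕ => ENNReal.ofReal ((8*2^s) * (2⁻¹:ℝ)^N)) atTop (𝓝 0) := by
    have h7 : Tendsto (fun N:ℕ => (8*2^s) * (2⁻¹:ℝ)^N) atTop (𝓝 0) := by
      have := (tendsto_pow_atTop_nhds_zero_of_lt_one
        (by norm_num : (0:ℝ) ≤ 2⁻¹) (by norm_num : (2⁻¹:ℝ) < 1)).const_mul (8*2^s)
      simpa using this
    simpa using ENNReal.tendsto_ofReal h7
  refine le_antisymm ?_ zero_le
  calc μH[s] (K ∩ Icc (M:ℝ) ((M:ℝ)+1))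
      ≤ liminf (fun N:ℕ => ∑' ij : ℕ × ℕ, EMetric.diam (t N ij) ^ s) atTop := hμ
    _ ≤ liminf (fun N:ℕ => ENNReal.ofReal ((8 * 2^s) * (2⁻¹:ℝ)^N)) atTop :=
        liminf_le_liminf (Eventually.of_forall hsum)
    _ = 0 := hlim.liminf_eq

theorem stmt7 (b : ℕ) (hb : 2 ≤ b) (a : ℕ → ℕ) (ha : StrictMono a)
    (hpos : ∀ n, 1 ≤ a n) (η : ℝ)
    (hbdd : BddAbove (Set.range fun n => (a (n + 1) : ℝ) / (a n : ℝ)))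
    (hη : Filter.limsup (fun n => (a (n + 1) : ℝ) / (a n : ℝ)) atTop = η) :
    dimH {ξ : ℝ | (η : EReal) ≤ vhatbA b a ξ} = 0 := by
  have hb1 : (1:ℝ) < b := by exact_mod_cast lt_of_lt_of_le one_lt_two hb
  obtain ⟨C, hC⟩ := hbdd
  have hbound : IsBoundedUnder (· ≤ ·) atTop (fun n => (a (n + 1) : ℝ) / (a n : ℝ)) :=
    isBoundedUnder_of ⟨C, fun n => hC ⟨n, rfl⟩⟩
  have hapos : ∀ n, (0:ℝ) < a n := fun n => by
    have := hpos n; positivity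
  have hη1 : 1 ≤ η := by
    rw [← hη]
    apply le_limsup_of_frequently_le _ hbound
    apply Frequently.of_forall
    intro n
    rw [le_div_iff₀ (hapos n), one_mul]
    exact_mod_cast (ha (Nat.lt_succ_self n)).le
  have hratio : ∀ ε : ℝ, 0 < ε → ∀ᶠ N in atTop, (a (N+1) : ℝ) ≤ (η + ε) * a N := by
    intro ε hε
    have hls : limsup (fun n => (a (n + 1) : ℝ) / (a n : ℝ)) atTop < η + ε := by
      rw [hη]; linarith
    filter_upwards [eventually_lt_of_limsup_lt hls hbound] with N hN
    rw [div_lt_iff₀ (hapos N)] at hN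
    linarith
  set T := {ξ : ℝ | (η : EReal) ≤ vhatbA b a ξ} with hT
  set Bad := {ξ : ℝ | ∃ x : ℕ, dni ((b:ℝ)^x * ξ) = 0} with hBad
  have hBadsub : Bad ⊆ ⋃ x : ℕ, Set.range (fun k : ℤ => (k:ℝ) / (b:ℝ)^x) := by
    rintro ξ ⟨x, hx⟩
    have hk' : (b:ℝ)^x * ξ - round ((b:ℝ)^x * ξ) = 0 := abs_eq_zero.mp hx
    refine mem_iUnion.mpr ⟨x, ⟨round ((b:ℝ)^x * ξ), ?_⟩⟩
    have hBx : ((b:ℝ)^x) ≠ 0 := by positivity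
    rw [div_eq_iff hBx]
    linarith
  have hBadcount : Bad.Countable :=
    Countable.mono hBadsub (countable_iUnion fun x => countable_range _)
  have hvext : ∀ ξ, ξ ∈ T → ∀ ε : ℝ, 0 < ε → ∃ v : ℝ, η - ε < v ∧ v ≤ η ∧
      ∀ᶠ N in atTop, ∃ n, 1 ≤ n ∧ n ≤ N ∧
        dni ((b:ℝ)^(a n) * ξ) < (b:ℝ) ^ (-((a N : ℝ) * v)) := by
    intro ξ hξ ε hε
    have h1 : ((η - ε : ℝ) : EReal) < vhatbA b a ξ :=
      lt_of_lt_of_le (by exact_mod_cast (by linarith : η - ε < η)) hξ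
    rw [vhatbA, lt_sSup_iff] at h1
    obtain ⟨y, hy, hlt⟩ := h1
    obtain ⟨v₀, ⟨hv₀0, hv₀e⟩, rfl⟩ := hy
    have hv₀ : η - ε < v₀ := by
      simp only [] at hlt
      exact_mod_cast hlt
    refine ⟨min v₀ η, lt_min hv₀ (by linarith), min_le_right _ _, ?_⟩
    filter_upwards [hv₀e] with N hN
    obtain ⟨n, hn1, hnN, hd⟩ := hN
    refine ⟨n, hn1, hnN, lt_of_lt_of_le hd ?_⟩
    apply (Real.rpow_le_rpow_left_iff hb1).mpr
    have haN : (0:ℝ) ≤ (a N : ℝ) := Nat.cast_nonneg _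
    have hmin := mul_le_mul_of_nonneg_left (min_le_left v₀ η) haN
    nlinarith
  refine le_antisymm ?_ zero_le
  refine dimH_le fun d hμd => ?_
  by_contra hdle
  have hd0' : (0:ℝ) < (d:ℝ) := by
    rcases eq_or_lt_of_le (zero_le : (0:ℝ≥0) ≤ d) with h | h
    · exact absurd (by rw [← h]; exact le_rfl : (d:ℝ≥0∞) ≤ 0) hdle
    · exact_mod_cast h
  set w : ℕ := ⌈η⌉₊ + ⌈(2:ℝ)/(d:ℝ)⌉₊ + 1 with hwdef
  have hwη : η ≤ (w:ℝ) := by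
    refine le_trans (Nat.le_ceil η) ?_
    have : (⌈η⌉₊ : ℕ) ≤ w := by omega
    exact_mod_cast this
  have hw2 : 2 ≤ (d:ℝ) * (1 + (w:ℝ)) := by
    have h2d : (2:ℝ)/(d:ℝ) ≤ (⌈(2:ℝ)/(d:ℝ)⌉₊ : ℝ) := Nat.le_ceil _
    have hcw : ((⌈(2:ℝ)/(d:ℝ)⌉₊ : ℕ) : ℝ) ≤ (w:ℝ) := by
      have : (⌈(2:ℝ)/(d:ℝ)⌉₊ : ℕ) ≤ w := by omega
      exact_mod_cast this
    have h3 : (2:ℝ)/(d:ℝ) ≤ 1 + (w:ℝ) := by linarith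
    calc (2:ℝ) = (d:ℝ) * (2/(d:ℝ)) := by field_simp
      _ ≤ (d:ℝ) * (1+(w:ℝ)) := mul_le_mul_of_nonneg_left h3 hd0'.le
  have hsubset : T ⊆ Bad ∪
      {ξ : ℝ | ∃ᶠ n in atTop, dni ((b:ℝ)^(a n) * ξ) < (b:ℝ) ^ (-((a n : ℝ) * (w:ℝ)))} := by
    intro ξ hξ
    by_cases hbad : ∃ x:ℕ, dni ((b:ℝ)^x * ξ) = 0
    · exact Or.inl hbad
    · push_neg at hbad
      exact Or.inr (lemma1 b hb a ha hpos η hη1 hratio ξ hbad (hvext ξ hξ) (w:ℝ) hwη)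
  have hKzero := cover_zero b hb a ha ((d:ℝ≥0):ℝ) hd0' w hw2
  have hBadzero : μH[((d:ℝ≥0):ℝ)] Bad = 0 := by
    apply hausdorffMeasure_of_dimH_lt
    rw [dimH_countable hBadcount]
    exact_mod_cast hd0'
  have hzero : μH[((d:ℝ≥0):ℝ)] T = 0 :=
    measure_mono_null hsubset (measure_union_null hBadzero hKzero)
  rw [hμd] at hzero
  exact ENNReal.top_ne_zero hzero
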